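/- arXiv:0911.1074 — 5 statements merged into one kernel-verified Lean document; each statement's English description precedes it below -/
import Mathlib

section
/- Let a : ℕ → ℚ be any sequence and define b : ℕ → ℚ by b_n = n·a_{n−1} for n ≥ 1 and b_0 = 0. Then a is in S₊ if and only if b is in S₋. In particular, for every n ≥ 1 one has the identity ∑_{k=0}^{n} (n choose k)(−1)^k · k·a_{k−1} = −n·∑_{k=0}^{n−1} (n−1 choose k)(−1)^k a_k. -/
lemma key_sum (a : ℕ → ℚ) (m : ℕ) :
    ∑ k ∈ Finset.range (m + 2), ((m + 1).choose k : ℚ) * (-1) ^ k * ((k : ℚ) * a (k - 1)) =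
      -((m : ℚ) + 1) * ∑ k ∈ Finset.range (m + 1), (m.choose k : ℚ) * (-1) ^ k * a k := by
  rw [Finset.sum_range_succ', Finset.mul_sum]
  simp only [Nat.cast_zero, zero_mul, mul_zero, add_zero, Nat.add_sub_cancel]
  refine Finset.sum_congr rfl fun k _ => ?_
  have h := Nat.add_one_mul_choose_eq m k
  have h' : ((m : ℚ) + 1) * (m.choose k : ℚ) = ((m + 1).choose (k + 1) : ℚ) * ((k : ℚ) + 1) := by
    exact_mod_cast congrArg (Nat.cast : ℕ → ℚ) h
  push_cast
  linear_combination (-1) ^ k * a k * h'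

theorem Splus_iff_shifted_Sminus (a b : ℕ → ℚ)
    (hb0 : b 0 = 0) (hb : ∀ m : ℕ, 1 ≤ m → b m = (m : ℚ) * a (m - 1)) :
    ((∀ n : ℕ, ∑ k ∈ Finset.range (n + 1), (n.choose k : ℚ) * (-1) ^ k * a k = a n) ↔
      (∀ n : ℕ, ∑ k ∈ Finset.range (n + 1), (n.choose k : ℚ) * (-1) ^ k * b k = -b n)) ∧
    (∀ n : ℕ, 1 ≤ n →
      ∑ k ∈ Finset.range (n + 1), (n.choose k : ℚ) * (-1) ^ k * ((k : ℚ) * a (k - 1)) =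
        -(n : ℚ) * ∑ k ∈ Finset.range n, ((n - 1).choose k : ℚ) * (-1) ^ k * a k) := by
  have key : ∀ n : ℕ, 1 ≤ n →
      ∑ k ∈ Finset.range (n + 1), (n.choose k : ℚ) * (-1) ^ k * ((k : ℚ) * a (k - 1)) =
        -(n : ℚ) * ∑ k ∈ Finset.range n, ((n - 1).choose k : ℚ) * (-1) ^ k * a k := by
    intro n hn
    obtain ⟨m, rfl⟩ := Nat.exists_eq_add_of_le hn
    have := key_sum a m
    simpa [Nat.add_sub_cancel, add_comm 1 m] using this
  have hbsum : ∀ n : ℕ, ∑ k ∈ Finset.range (n + 1), (n.choose k : ℚ) * (-1) ^ k * b k =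
      ∑ k ∈ Finset.range (n + 1), (n.choose k : ℚ) * (-1) ^ k * ((k : ℚ) * a (k - 1)) := by
    intro n
    refine Finset.sum_congr rfl fun k _ => ?_
    rcases Nat.eq_zero_or_pos k with rfl | hk
    · simp [hb0]
    · rw [hb k hk]
  refine ⟨⟨fun ha n => ?_, fun hB m => ?_⟩, key⟩
  · rcases Nat.eq_zero_or_pos n with rfl | hn
    · simp [hb0]
    · rw [hbsum, key n hn, hb n hn]
      obtain ⟨p, rfl⟩ := Nat.exists_eq_add_of_le hn
      simp only [Nat.add_sub_cancel, add_comm 1 p] at *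
      rw [ha p]
      ring
  · have h := hB (m + 1)
    rw [hbsum, key (m + 1) (by omega), hb (m + 1) (by omega)] at h
    simp only [Nat.add_sub_cancel] at h
    have hm1 : ((m : ℚ) + 1) ≠ 0 := by positivity
    have : -((m : ℚ) + 1) * ∑ k ∈ Finset.range (m + 1), (m.choose k : ℚ) * (-1) ^ k * a k
        = -((m : ℚ) + 1) * a m := by push_cast at h ⊢; linarith [h]
    have := mul_left_cancel₀ (by simpa using (neg_ne_zero.mpr hm1)) this
    exact this
end

section
/- Let a : ℕ → ℚ be a sequence in S₋, i.e. ∑_{k=0}^{n} (n choose k)(−1)^k a_k = −a_n for every n ≥ 0. Then for all integers m, n ≥ 0, ∑_{k=0}^{n} [ C((m−1)n+k−1, k) + (−1)^{n−k} C(mn, k) ] · a_{n−k} = 0, where C(x, k) denotes the generalized binomial coefficient x(x−1)⋯(x−k+1)/k! for an integer x (possibly negative) and a natural number k. -/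
/-- Generalized binomial coefficient `C(x, k) = x(x-1)⋯(x-k+1)/k!` for an integer `x`. -/
def genChoose (x : ℤ) (k : ℕ) : ℚ :=
  (∏ j ∈ Finset.range k, ((x : ℚ) - (j : ℚ))) / (k.factorial : ℚ)

lemma genChoose_zero (x : ℤ) : genChoose x 0 = 1 := by simp [genChoose]

lemma genChoose_zero_left (k : ℕ) : genChoose 0 (k + 1) = 0 := by
  simp [genChoose, Finset.prod_range_succ']

lemma genChoose_pascal (x : ℤ) (k : ℕ) :
    genChoose (x + 1) (k + 1) = genChoose x k + genChoose x (k + 1) := by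
  have hprod : (∏ j ∈ Finset.range (k + 1), (((x + 1 : ℤ) : ℚ) - (j : ℚ)))
      = ((x : ℚ) + 1) * ∏ j ∈ Finset.range k, ((x : ℚ) - (j : ℚ)) := by
    have hinner : (∏ j ∈ Finset.range k, (((x + 1 : ℤ) : ℚ) - (((j + 1 : ℕ)) : ℚ)))
        = ∏ j ∈ Finset.range k, ((x : ℚ) - (j : ℚ)) :=
      Finset.prod_congr rfl (fun j _ => by push_cast; ring)
    rw [Finset.prod_range_succ', hinner]
    push_cast
    ring
  have h2 : (∏ j ∈ Finset.range (k + 1), ((x : ℚ) - (j : ℚ)))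
      = (∏ j ∈ Finset.range k, ((x : ℚ) - (j : ℚ))) * ((x : ℚ) - (k : ℚ)) :=
    Finset.prod_range_succ _ _
  have hk : ((k.factorial : ℚ)) ≠ 0 := Nat.cast_ne_zero.2 k.factorial_ne_zero
  have hk1 : ((k : ℚ) + 1) ≠ 0 := by positivity
  unfold genChoose
  rw [hprod, h2, Nat.factorial_succ]
  push_cast
  field_simp
  ring

lemma genChoose_nat (n : ℕ) : ∀ k : ℕ, genChoose (n : ℤ) k = (n.choose k : ℚ) := by
  induction n with
  | zero =>
    intro k
    cases k with
    | zero => simp [genChoose_zero]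
    | succ k => simpa using genChoose_zero_left k
  | succ n ih =>
    intro k
    cases k with
    | zero => simp [genChoose_zero]
    | succ k =>
      rw [show ((n + 1 : ℕ) : ℤ) = (n : ℤ) + 1 by push_cast; ring, genChoose_pascal, ih, ih,
        Nat.choose_succ_succ]
      push_cast; ring

lemma genChoose_reflect (y : ℤ) (k : ℕ) :
    genChoose (y + (k : ℤ) - 1) k = (-1 : ℚ) ^ k * genChoose (-y) k := by
  unfold genChoose
  have h1 : (∏ j ∈ Finset.range k, (((y + (k : ℤ) - 1 : ℤ) : ℚ) - (j : ℚ)))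
      = ∏ j ∈ Finset.range k, ((y : ℚ) + (j : ℚ)) := by
    rw [← Finset.prod_range_reflect (fun j => ((y : ℚ) + (j : ℚ))) k]
    apply Finset.prod_congr rfl
    intro j hj
    have hj' : j < k := Finset.mem_range.mp hj
    have : ((k - 1 - j : ℕ) : ℚ) = (k : ℚ) - 1 - (j : ℚ) := by
      have h1 : ((k - 1 - j : ℕ) : ℤ) = (k : ℤ) - 1 - (j : ℤ) := by omega
      have := congrArg (fun z : ℤ => (z : ℚ)) h1
      push_cast at this ⊢
      linarith
    rw [this]
    push_cast
    ring
  have h2 : (∏ j ∈ Finset.range k, (((-y : ℤ) : ℚ) - (j : ℚ)))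
      = (-1 : ℚ) ^ k * ∏ j ∈ Finset.range k, ((y : ℚ) + (j : ℚ)) := by
    rw [show ((-1 : ℚ) ^ k) = ∏ _j ∈ Finset.range k, (-1 : ℚ) from by simp,
      ← Finset.prod_mul_distrib]
    exact Finset.prod_congr rfl (fun j _ => by push_cast; ring)
  rw [h1, h2]
  have hsq : ((-1 : ℚ) ^ k) * ((-1 : ℚ) ^ k) = 1 := by
    rw [← pow_add, ← two_mul, pow_mul]; norm_num
  have hk : ((k.factorial : ℚ)) ≠ 0 := Nat.cast_ne_zero.2 k.factorial_ne_zero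
  field_simp
  rw [sq, hsq, mul_one]

/-- The auxiliary sum `G_n(x) = ∑ (−1)^(n−k) C(x,k) a_{n−k}`. -/
def Gfun (a : ℕ → ℚ) (n : ℕ) (x : ℤ) : ℚ :=
  ∑ k ∈ Finset.range (n + 1), (-1 : ℚ) ^ (n - k) * genChoose x k * a (n - k)

lemma G_step (a : ℕ → ℚ) (n : ℕ) (x : ℤ) :
    Gfun a (n + 1) (x + 1) = Gfun a (n + 1) x + Gfun a n x := by
  unfold Gfun
  rw [Finset.sum_range_succ'
      (fun k => (-1 : ℚ) ^ (n + 1 - k) * genChoose (x + 1) k * a (n + 1 - k)) (n + 1),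
    Finset.sum_range_succ'
      (fun k => (-1 : ℚ) ^ (n + 1 - k) * genChoose x k * a (n + 1 - k)) (n + 1)]
  simp only [Nat.succ_sub_succ, Nat.sub_zero, genChoose_zero]
  have key : (∑ k ∈ Finset.range (n + 1),
        (-1 : ℚ) ^ (n - k) * genChoose (x + 1) (k + 1) * a (n - k))
      = (∑ k ∈ Finset.range (n + 1), (-1 : ℚ) ^ (n - k) * genChoose x (k + 1) * a (n - k))
        + ∑ k ∈ Finset.range (n + 1), (-1 : ℚ) ^ (n - k) * genChoose x k * a (n - k) := by
    rw [← Finset.sum_add_distrib]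
    apply Finset.sum_congr rfl
    intro k _
    rw [genChoose_pascal]
    ring
  rw [key]
  ring

lemma G_zero (a : ℕ → ℚ) (n : ℕ) : Gfun a n 0 = (-1 : ℚ) ^ n * a n := by
  unfold Gfun
  rw [Finset.sum_range_succ']
  simp [genChoose_zero_left, genChoose_zero]

lemma G_diag (a : ℕ → ℚ)
    (ha : ∀ n : ℕ, ∑ k ∈ Finset.range (n + 1), (n.choose k : ℚ) * (-1) ^ k * a k = -a n)
    (n : ℕ) : Gfun a n (n : ℤ) = -a n := by
  unfold Gfun
  rw [← Finset.sum_range_reflect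
      (fun k => (-1 : ℚ) ^ (n - k) * genChoose (n : ℤ) k * a (n - k)) (n + 1)]
  rw [← ha n]
  apply Finset.sum_congr rfl
  intro k hk
  have hk' : k ≤ n := Nat.lt_succ_iff.mp (Finset.mem_range.mp hk)
  simp only [Nat.add_sub_cancel]
  rw [genChoose_nat, Nat.sub_sub_self hk', Nat.choose_symm hk']
  ring

lemma main_lemma (a : ℕ → ℚ)
    (ha : ∀ n : ℕ, ∑ k ∈ Finset.range (n + 1), (n.choose k : ℚ) * (-1) ^ k * a k = -a n) :
    ∀ (n : ℕ) (x : ℤ), Gfun a n x + (-1 : ℚ) ^ n * Gfun a n ((n : ℤ) - x) = 0 := by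
  have ha0 : a 0 = 0 := by
    have h := ha 0
    simp at h
    linarith
  intro n
  induction n with
  | zero =>
    intro x
    have h1 : ∀ y : ℤ, Gfun a 0 y = 0 := by
      intro y
      simp [Gfun, genChoose_zero, ha0]
    simp [h1]
  | succ n ih =>
    have step : ∀ x : ℤ,
        Gfun a (n + 1) (x + 1)
            + (-1 : ℚ) ^ (n + 1) * Gfun a (n + 1) (((n + 1 : ℕ) : ℤ) - (x + 1))
          = Gfun a (n + 1) x + (-1 : ℚ) ^ (n + 1) * Gfun a (n + 1) (((n + 1 : ℕ) : ℤ) - x) := by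
      intro x
      have e1 : ((n + 1 : ℕ) : ℤ) - (x + 1) = (n : ℤ) - x := by push_cast; ring
      have e2 : ((n + 1 : ℕ) : ℤ) - x = ((n : ℤ) - x) + 1 := by push_cast; ring
      have h1 := G_step a n x
      have h2 := G_step a n ((n : ℤ) - x)
      have h3 := ih x
      have hsgn : (-1 : ℚ) ^ (n + 1) = -(-1 : ℚ) ^ n := by ring
      rw [e1, e2, h1, h2, hsgn]
      ring_nf
      ring_nf at h3
      linarith
    have anchor : Gfun a (n + 1) 0
        + (-1 : ℚ) ^ (n + 1) * Gfun a (n + 1) (((n + 1 : ℕ) : ℤ) - 0) = 0 := by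
      rw [sub_zero, G_zero, G_diag a ha]
      ring
    intro x
    induction x using Int.induction_on with
    | zero => simpa using anchor
    | succ i ihp =>
      rw [step (i : ℤ)]
      exact ihp
    | pred i ihn =>
      have h := step (-(i : ℤ) - 1)
      rw [show (-(i : ℤ) - 1) + 1 = -(i : ℤ) by ring] at h
      rw [← h]
      exact ihn

lemma neg_one_pow_split (n k : ℕ) (hk : k ≤ n) :
    (-1 : ℚ) ^ k = (-1 : ℚ) ^ n * (-1 : ℚ) ^ (n - k) := by
  rw [← pow_add, show n + (n - k) = k + 2 * (n - k) from by omega, pow_add, pow_mul]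
  simp

theorem Sminus_binomial_identity (a : ℕ → ℚ)
    (ha : ∀ n : ℕ, ∑ k ∈ Finset.range (n + 1), (n.choose k : ℚ) * (-1) ^ k * a k = -a n)
    (m n : ℕ) :
    ∑ k ∈ Finset.range (n + 1),
      (genChoose (((m : ℤ) - 1) * (n : ℤ) + (k : ℤ) - 1) k +
        (-1 : ℚ) ^ (n - k) * genChoose ((m : ℤ) * (n : ℤ)) k) * a (n - k) = 0 := by
  have key := main_lemma a ha n ((m : ℤ) * (n : ℤ))
  have hsum : (∑ k ∈ Finset.range (n + 1),
      (genChoose (((m : ℤ) - 1) * (n : ℤ) + (k : ℤ) - 1) k +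
        (-1 : ℚ) ^ (n - k) * genChoose ((m : ℤ) * (n : ℤ)) k) * a (n - k))
      = Gfun a n ((m : ℤ) * (n : ℤ))
        + (-1 : ℚ) ^ n * Gfun a n ((n : ℤ) - (m : ℤ) * (n : ℤ)) := by
    unfold Gfun
    rw [Finset.mul_sum, ← Finset.sum_add_distrib]
    apply Finset.sum_congr rfl
    intro k hk
    have hk' : k ≤ n := Nat.lt_succ_iff.mp (Finset.mem_range.mp hk)
    rw [genChoose_reflect (((m : ℤ) - 1) * (n : ℤ)) k,
      show -(((m : ℤ) - 1) * (n : ℤ)) = (n : ℤ) - (m : ℤ) * (n : ℤ) from by ring,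
      neg_one_pow_split n k hk']
    ring
  rw [hsum, key]
end

section
/- Let a : ℕ → ℚ be a sequence in S₋, i.e. ∑_{k=0}^{n} (n choose k)(−1)^k a_k = −a_n for every n ≥ 0 (in particular a_0 = 0). Let p ≥ 3 be an odd prime and for each j ≥ 1 set S_j = ∑_{k=1}^{p−1} H_{k−1}^{(j−1)} · a_{p−k}/k, where H_r^{(n)} is the multiple harmonic sum and H_r^{(0)} = 1. Then for every integer m ≥ 1, ∑_{j=1}^{p−1} ( (m−1)^j − (−m)^j ) · p^j · S_j = 0 (an exact identity of rational numbers). -/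
/-- The multiple harmonic sum `H_r^{(n)} = ∑_{1 ≤ k₁ < ⋯ < kₙ ≤ r} 1/(k₁⋯kₙ)`,
with `H_r^{(0)} = 1` and `H_r^{(n)} = 0` for `n > r`. -/
def mhs (r n : ℕ) : ℚ :=
  ∑ k ∈ (Finset.univ.filter fun k : Fin n → Fin (r + 1) =>
      (∀ i j : Fin n, i < j → k i < k j) ∧ ∀ i, 0 < (k i : ℕ)),
    ∏ i, (1 : ℚ) / ((k i : ℕ) : ℚ)

lemma mhs_eq (r n : ℕ) :
    mhs r n = ∑ s ∈ (Finset.Icc 1 r).powersetCard n, ∏ v ∈ s, (1:ℚ)/(v:ℚ) := by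
  classical
  unfold mhs
  refine Finset.sum_bij
    (fun k _ => Finset.image (fun idx => ((k idx : Fin (r+1)) : ℕ)) Finset.univ)
    ?_ ?_ ?_ ?_
  · -- maps to
    intro k hk
    rw [Finset.mem_filter] at hk
    obtain ⟨-, hmono, hpos⟩ := hk
    have hsm : StrictMono fun idx => ((k idx : Fin (r+1)) : ℕ) := by
      intro i j hij
      exact hmono i j hij
    rw [Finset.mem_powersetCard]
    refine ⟨?_, ?_⟩
    · intro v hv
      rw [Finset.mem_image] at hv
      obtain ⟨idx, -, rfl⟩ := hv
      exact Finset.mem_Icc.mpr ⟨hpos idx, Nat.lt_succ_iff.mp (k idx).isLt⟩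
    · rw [Finset.card_image_of_injective _ hsm.injective, Finset.card_univ, Fintype.card_fin]
  · -- injective
    intro k1 hk1 k2 hk2 heq
    rw [Finset.mem_filter] at hk1 hk2
    have hsm1 : StrictMono fun idx => ((k1 idx : Fin (r+1)) : ℕ) := fun i j hij => hk1.2.1 i j hij
    have hsm2 : StrictMono fun idx => ((k2 idx : Fin (r+1)) : ℕ) := fun i j hij => hk2.2.1 i j hij
    set s := Finset.image (fun idx => ((k1 idx : Fin (r+1)) : ℕ)) Finset.univ with hs
    have hcard : s.card = n := by
      rw [hs, Finset.card_image_of_injective _ hsm1.injective, Finset.card_univ, Fintype.card_fin]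
    have h1 : (fun idx => ((k1 idx : Fin (r+1)) : ℕ)) = s.orderEmbOfFin hcard :=
      Finset.orderEmbOfFin_unique hcard (fun i => Finset.mem_image_of_mem _ (Finset.mem_univ i)) hsm1
    have h2 : (fun idx => ((k2 idx : Fin (r+1)) : ℕ)) = s.orderEmbOfFin hcard :=
      Finset.orderEmbOfFin_unique hcard (fun i => by
        have heq' : Finset.image (fun idx => ((k1 idx : Fin (r+1)) : ℕ)) Finset.univ
            = Finset.image (fun idx => ((k2 idx : Fin (r+1)) : ℕ)) Finset.univ := heq
        rw [hs, heq']
        exact Finset.mem_image_of_mem _ (Finset.mem_univ i)) hsm2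
    funext idx
    have := congrFun (h1.trans h2.symm) idx
    exact Fin.val_injective this
  · -- surjective
    intro s hs
    rw [Finset.mem_powersetCard] at hs
    obtain ⟨hsub, hcard⟩ := hs
    have hmem : ∀ idx : Fin n, s.orderEmbOfFin hcard idx ∈ Finset.Icc 1 r :=
      fun idx => hsub (s.orderEmbOfFin_mem hcard idx)
    set kk : Fin n → Fin (r+1) := fun idx => ⟨s.orderEmbOfFin hcard idx,
      Nat.lt_succ_of_le (Finset.mem_Icc.mp (hmem idx)).2⟩ with hkk
    have hkkinj : Function.Injective fun idx => ((kk idx : Fin (r+1)) : ℕ) :=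
      fun i j h => (s.orderEmbOfFin hcard).injective h
    refine ⟨kk, ?_, ?_⟩
    · rw [Finset.mem_filter]
      refine ⟨Finset.mem_univ _, fun i j hij => ?_, fun idx => (Finset.mem_Icc.mp (hmem idx)).1⟩
      exact (s.orderEmbOfFin hcard).strictMono hij
    · apply Finset.eq_of_subset_of_card_le
      · intro v hv
        rw [Finset.mem_image] at hv
        obtain ⟨idx, -, rfl⟩ := hv
        exact s.orderEmbOfFin_mem hcard idx
      · show s.card ≤ (Finset.image (fun idx => ((kk idx : Fin (r+1)) : ℕ)) Finset.univ).card
        rw [hcard, Finset.card_image_of_injective _ hkkinj, Finset.card_univ, Fintype.card_fin]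
  · -- values
    intro k hk
    rw [Finset.mem_filter] at hk
    have hsm : StrictMono fun idx => ((k idx : Fin (r+1)) : ℕ) := fun i j hij => hk.2.1 i j hij
    rw [Finset.prod_image (fun i _ j _ h => hsm.injective h)]

lemma mhs_eq_zero {r n : ℕ} (h : r < n) : mhs r n = 0 := by
  rw [mhs_eq, Finset.powersetCard_eq_empty.mpr (by simp [h])]
  exact Finset.sum_empty

lemma mhs_gen (r : ℕ) (x : ℚ) :
    ∑ j ∈ Finset.range (r+1), mhs r j * x^j = ∏ v ∈ Finset.Icc 1 r, (1 + x/(v:ℚ)) := by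
  have h1 : ∀ v ∈ Finset.Icc 1 r, (1 + x/(v:ℚ)) = x/(v:ℚ) + 1 := fun v _ => by ring
  rw [Finset.prod_congr rfl h1, Finset.prod_add]
  rw [Finset.powerset_card_disjiUnion]
  erw [Finset.sum_disjiUnion]
  have hc : (Finset.Icc 1 r).card = r := by simp
  rw [hc]
  refine Finset.sum_congr rfl fun j hj => ?_
  rw [mhs_eq, Finset.sum_mul]
  refine Finset.sum_congr rfl fun s hs => ?_
  have hcard : s.card = j := (Finset.mem_powersetCard.mp hs).2
  rw [Finset.prod_const_one, mul_one]
  have : ∀ v ∈ s, x/(v:ℚ) = x * (1/(v:ℚ)) := fun v _ => by ring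
  rw [Finset.prod_congr rfl this, Finset.prod_mul_distrib, Finset.prod_const, hcard, mul_comm]

def ffq (z : ℚ) (k : ℕ) : ℚ := (∏ i ∈ Finset.range k, (z - i)) / (k.factorial : ℚ)

lemma ffq_zero (z : ℚ) : ffq z 0 = 1 := by simp [ffq]

lemma prod_succ_left (z : ℚ) (k : ℕ) :
    ∏ i ∈ Finset.range (k+1), (z - i) = z * ∏ i ∈ Finset.range k, ((z - 1) - i) := by
  rw [Finset.prod_range_succ']
  push_cast
  have h : ∀ i ∈ Finset.range k, z - ((i:ℚ)+1) = z - 1 - i := fun i _ => by ring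
  rw [Finset.prod_congr rfl h]
  ring

lemma ffq_pascal (w : ℚ) (k : ℕ) : ffq (w+1) (k+1) = ffq w (k+1) + ffq w k := by
  unfold ffq
  have h1 : ∏ i ∈ Finset.range (k+1), (w + 1 - i)
      = (w+1) * ∏ i ∈ Finset.range k, (w - i) := by
    have := prod_succ_left (w+1) k
    simpa using this
  have h2 : ∏ i ∈ Finset.range (k+1), (w - i)
      = (∏ i ∈ Finset.range k, (w - i)) * (w - k) := Finset.prod_range_succ _ _
  rw [h1, h2, Nat.factorial_succ]
  have hk : (k.factorial : ℚ) ≠ 0 := Nat.cast_ne_zero.mpr k.factorial_ne_zero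
  have hk1 : ((k+1 : ℕ) : ℚ) ≠ 0 := by positivity
  push_cast
  field_simp
  ring

lemma ffq_FD : ∀ k d : ℕ, ∀ z : ℚ, ffq (z - d) k =
    ∑ i ∈ Finset.range (k+1), (-1)^i * ((d + i - 1).choose i : ℚ) * ffq z (k - i) := by
  intro k
  induction k with
  | zero =>
    intro d z
    simp [ffq]
  | succ k IHk =>
    intro d
    induction d with
    | zero =>
      intro z
      rw [Finset.sum_eq_single 0]
      · simp [ffq]
      · intro i hi hne
        have h0 : (0 + i - 1).choose i = 0 := Nat.choose_eq_zero_of_lt (by omega)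
        rw [h0]
        simp
      · intro h; simp at h
    | succ d IHd =>
      intro z
      have hcast : ((d+1 : ℕ) : ℚ) = (d : ℚ) + 1 := by push_cast; ring
      have hp : ffq (z - d) (k+1) = ffq (z - ((d:ℚ)+1)) (k+1) + ffq (z - ((d:ℚ)+1)) k := by
        have h := ffq_pascal (z - ((d:ℚ)+1)) k
        have h1 : z - ((d:ℚ)+1) + 1 = z - d := by ring
        rw [h1] at h
        exact h
      have hA := IHd z
      have hB := IHk (d+1) z
      rw [hcast] at hB
      have hgoal : ffq (z - ((d:ℚ)+1)) (k+1) = ffq (z - d) (k+1) - ffq (z - ((d:ℚ)+1)) k := by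
        rw [hp]; ring
      rw [hcast, hgoal, hA, hB]
      rw [Finset.sum_range_succ' (fun i => (-1)^i * (((d + i - 1).choose i : ℕ) : ℚ) * ffq z (k + 1 - i)) (k+1)]
      rw [show (∑ i ∈ Finset.range (k+1+1), (-1)^i * (((d + 1 + i - 1).choose i : ℕ) : ℚ) * ffq z (k + 1 - i))
        = (∑ i ∈ Finset.range (k+1), (-1)^(i+1) * (((d + 1 + (i+1) - 1).choose (i+1) : ℕ) : ℚ) * ffq z (k + 1 - (i+1)))
          + (-1)^0 * (((d + 1 + 0 - 1).choose 0 : ℕ) : ℚ) * ffq z (k+1-0) from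
        Finset.sum_range_succ' (fun i => (-1)^i * (((d + 1 + i - 1).choose i : ℕ) : ℚ) * ffq z (k + 1 - i)) (k+1)]
      have hzero : ∀ i ∈ Finset.range (k+1),
          (-1:ℚ)^(i+1) * (((d + 1 + (i+1) - 1).choose (i+1) : ℕ) : ℚ) * ffq z (k + 1 - (i+1))
          = (-1)^(i+1) * (((d + (i+1) - 1).choose (i+1) : ℕ) : ℚ) * ffq z (k + 1 - (i+1))
            - (-1)^i * (((d + 1 + i - 1).choose i : ℕ) : ℚ) * ffq z (k - i) := by
        intro i _
        have e1 : d + 1 + (i+1) - 1 = (d + i) + 1 := by omega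
        have e2 : d + (i+1) - 1 = d + i := by omega
        have e3 : d + 1 + i - 1 = d + i := by omega
        have e4 : k + 1 - (i + 1) = k - i := by omega
        rw [e1, e2, e3, e4, Nat.choose_succ_succ]
        push_cast
        ring
      rw [Finset.sum_congr rfl hzero, Finset.sum_sub_distrib]
      simp only [Nat.choose_zero_right, pow_zero, one_mul, Nat.cast_one, Nat.sub_zero]
      ring

lemma prod_asc (x : ℚ) (k : ℕ) :
    ∏ i ∈ Finset.range k, (x + i) = ∏ i ∈ Finset.range k, ((x + k - 1) - i) := by
  induction k with
  | zero => simp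
  | succ k IH =>
    rw [Finset.prod_range_succ, IH]
    have h1 : ∀ i ∈ Finset.range (k+1), (x + ((k+1:ℕ):ℚ) - 1 - (i:ℚ)) = ((x+k) - i) :=
      fun i _ => by push_cast; ring
    rw [Finset.prod_congr rfl h1, prod_succ_left (x + (k:ℚ)) k]
    have h2 : ∀ i ∈ Finset.range k, ((x + (k:ℚ)) - 1 - (i:ℚ)) = (x + (k:ℚ) - 1 - i) :=
      fun i _ => by ring
    rw [Finset.prod_congr rfl h2]
    ring

lemma prod_neg (y : ℚ) (k : ℕ) :
    ∏ i ∈ Finset.range k, (-y + i) = (-1)^k * ∏ i ∈ Finset.range k, (y - i) := by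
  have h : ∀ i ∈ Finset.range k, (-y + (i:ℚ)) = (-1) * (y - i) := fun i _ => by ring
  rw [Finset.prod_congr rfl h, Finset.prod_mul_distrib, Finset.prod_const, Finset.card_range]

lemma bridge (x : ℚ) (k' : ℕ) :
    x / ((k'+1:ℕ):ℚ) * ∏ v ∈ Finset.Icc 1 k', (1 + x/(v:ℚ))
      = (∏ i ∈ Finset.range (k'+1), (x + i)) / ((k'+1).factorial : ℚ) := by
  have h1 : ∏ v ∈ Finset.Icc 1 k', (1 + x/(v:ℚ))
      = ∏ i ∈ Finset.range k', (1 + x/((1+i:ℕ):ℚ)) := by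
    rw [show Finset.Icc 1 k' = Finset.Ico 1 (k'+1) from by rw [Finset.Ico_add_one_right_eq_Icc]]
    rw [Finset.prod_Ico_eq_prod_range]
    simp
  have h2 : ∀ i ∈ Finset.range k', (1 + x/((1+i:ℕ):ℚ)) = (x + ((1+i:ℕ):ℚ))/((1+i:ℕ):ℚ) := by
    intro i _
    have hne : ((1+i:ℕ):ℚ) ≠ 0 := by positivity
    field_simp
    ring
  rw [h1, Finset.prod_congr rfl h2, Finset.prod_div_distrib]
  have h3 : ∏ i ∈ Finset.range k', ((1+i:ℕ):ℚ) = (k'.factorial : ℚ) := by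
    rw [← Nat.cast_prod]
    congr 1
    rw [← Finset.prod_range_add_one_eq_factorial]
    exact Finset.prod_congr rfl fun i _ => by omega
  have h4 : ∏ i ∈ Finset.range (k'+1), (x + i) = (∏ i ∈ Finset.range k', (x + ((1+i:ℕ):ℚ))) * x := by
    rw [Finset.prod_range_succ']
    have : ∀ i ∈ Finset.range k', (x + (((i+1):ℕ):ℚ)) = (x + ((1+i:ℕ):ℚ)) :=
      fun i _ => by norm_num [add_comm]
    rw [Finset.prod_congr rfl this]
    simp
  rw [h3, h4, Nat.factorial_succ]
  have hf : (k'.factorial : ℚ) ≠ 0 := Nat.cast_ne_zero.mpr k'.factorial_ne_zero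
  have hk1 : ((k'+1:ℕ):ℚ) ≠ 0 := by positivity
  push_cast
  field_simp

theorem Sminus_power_sum_identity (a : ℕ → ℚ)
    (ha : ∀ n : ℕ, ∑ k ∈ Finset.range (n + 1), (n.choose k : ℚ) * (-1) ^ k * a k = -a n)
    (p : ℕ) (hp : p.Prime) (hp3 : 3 ≤ p)
    (S : ℕ → ℚ)
    (hS : ∀ j : ℕ, 1 ≤ j →
      S j = ∑ k ∈ Finset.Icc 1 (p - 1), mhs (k - 1) (j - 1) * a (p - k) / (k : ℚ))
    (m : ℕ) (hm : 1 ≤ m) :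
    ∑ j ∈ Finset.Icc 1 (p - 1),
      (((m : ℚ) - 1) ^ j - (-(m : ℚ)) ^ j) * (p : ℚ) ^ j * S j = 0 := by
  classical
  set N := p - 1 with hNdef
  have hpN : p = N + 1 := by omega
  have hN2 : 2 ≤ N := by omega
  have hpodd : Odd p := hp.odd_of_ne_two (by omega)
  have ha0 : a 0 = 0 := by
    have h := ha 0
    simp at h
    linarith
  -- The key reflected relation derived from membership in S₋
  have KEY : ∀ n : ℕ, ∑ t ∈ Finset.range n, (-1:ℚ)^t * (n.choose t : ℚ) * a (n - t)
      = (-1:ℚ)^(n+1) * a n := by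
    intro n
    have h := ha n
    rw [← Finset.sum_range_reflect] at h
    have h2 : ∀ j ∈ Finset.range (n+1),
        (n.choose (n + 1 - 1 - j) : ℚ) * (-1)^(n + 1 - 1 - j) * a (n + 1 - 1 - j)
        = (-1:ℚ)^n * ((-1:ℚ)^j * (n.choose j : ℚ) * a (n - j)) := by
      intro j hj
      have hjn : j ≤ n := by
        have := Finset.mem_range.mp hj
        omega
      have e1 : n + 1 - 1 - j = n - j := by omega
      rw [e1, Nat.choose_symm hjn]
      have hh : ((-1:ℚ))^(n-j) * (-1)^j = (-1)^n := by
        rw [← pow_add]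
        congr 1
        omega
      have hj2 : ((-1:ℚ))^j * (-1)^j = 1 := by
        rw [← pow_add]
        exact Even.neg_one_pow ⟨j, by ring⟩
      have e2 : ((-1:ℚ))^(n-j) = (-1)^n * (-1)^j := by
        calc ((-1:ℚ))^(n-j) = (-1)^(n-j) * ((-1)^j * (-1)^j) := by rw [hj2, mul_one]
          _ = ((-1)^(n-j) * (-1)^j) * (-1)^j := by ring
          _ = (-1)^n * (-1)^j := by rw [hh]
      rw [e2]
      ring
    rw [Finset.sum_congr rfl h2, ← Finset.mul_sum] at h
    have hsq : ((-1:ℚ))^n * (-1)^n = 1 := by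
      rw [← pow_add]
      exact Even.neg_one_pow ⟨n, by ring⟩
    have h3 : ∑ j ∈ Finset.range (n+1), (-1:ℚ)^j * (n.choose j : ℚ) * a (n - j)
        = (-1:ℚ)^(n+1) * a n := by
      have h4 := congrArg (fun t : ℚ => (-1:ℚ)^n * t) h
      rw [← mul_assoc, hsq, one_mul] at h4
      rw [h4, pow_succ]
      ring
    rw [Finset.sum_range_succ, Nat.sub_self, ha0, mul_zero, add_zero] at h3
    exact h3
  -- T(x): power sums in terms of ascending factorial products
  have hT : ∀ x : ℚ, ∑ j ∈ Finset.Icc 1 N, x^j * S j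
      = ∑ k ∈ Finset.Icc 1 N, a (p - k) * ((∏ i ∈ Finset.range k, (x + i)) / (k.factorial : ℚ)) := by
    intro x
    have step1 : ∀ j ∈ Finset.Icc 1 N, x^j * S j
        = ∑ k ∈ Finset.Icc 1 N, x^j * (mhs (k-1) (j-1) * a (p-k) / (k:ℚ)) := by
      intro j hj
      rw [hS j (Finset.mem_Icc.mp hj).1, Finset.mul_sum]
    rw [Finset.sum_congr rfl step1, Finset.sum_comm]
    refine Finset.sum_congr rfl fun k hk => ?_
    obtain ⟨hk1, hkN⟩ := Finset.mem_Icc.mp hk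
    have inner : ∑ j ∈ Finset.Icc 1 N, x^j * (mhs (k-1) (j-1) * a (p-k) / (k:ℚ))
        = (a (p-k) / (k:ℚ)) * (x * ∑ t ∈ Finset.range N, mhs (k-1) t * x^t) := by
      rw [show Finset.Icc 1 N = Finset.Ico 1 (N+1) from by rw [Finset.Ico_add_one_right_eq_Icc]]
      rw [Finset.sum_Ico_eq_sum_range]
      simp only [Nat.add_sub_cancel]
      rw [Finset.mul_sum, Finset.mul_sum]
      refine Finset.sum_congr rfl fun t ht => ?_
      have e : 1 + t - 1 = t := by omega
      rw [e, pow_add, pow_one]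
      ring
    rw [inner]
    have trim : ∑ t ∈ Finset.range N, mhs (k-1) t * x^t
        = ∑ t ∈ Finset.range ((k-1)+1), mhs (k-1) t * x^t := by
      symm
      apply Finset.sum_subset (Finset.range_subset_range.mpr (by omega))
      intro t ht hnt
      have hlt : k - 1 < t := by
        simp only [Finset.mem_range] at ht hnt
        omega
      rw [mhs_eq_zero hlt, zero_mul]
    rw [trim, mhs_gen]
    have hb := bridge x (k-1)
    have hkk : k - 1 + 1 = k := by omega
    rw [hkk] at hb
    rw [← hb]
    ring
  -- setup of evaluation points
  set x1 : ℚ := ((m:ℚ) - 1) * (p:ℚ) with hx1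
  set y : ℚ := x1 + (p:ℚ) with hy
  have hgoal1 : ∑ j ∈ Finset.Icc 1 N, (((m:ℚ)-1)^j - (-(m:ℚ))^j) * (p:ℚ)^j * S j
      = (∑ j ∈ Finset.Icc 1 N, x1^j * S j)
        - ∑ j ∈ Finset.Icc 1 N, ((-(m:ℚ))*(p:ℚ))^j * S j := by
    rw [← Finset.sum_sub_distrib]
    refine Finset.sum_congr rfl fun j _ => ?_
    rw [hx1, mul_pow, mul_pow]
    ring
  rw [hgoal1, hT x1, hT ((-(m:ℚ))*(p:ℚ)), sub_eq_zero]
  -- rewrite the right-hand side using ffq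
  have rhsk : ∀ k ∈ Finset.Icc 1 N,
      a (p-k) * ((∏ i ∈ Finset.range k, (((-(m:ℚ))*(p:ℚ)) + i)) / (k.factorial : ℚ))
      = a (p-k) * ((-1:ℚ)^k * ffq y k) := by
    intro k _
    have hterm : ∀ i ∈ Finset.range k, (((-(m:ℚ))*(p:ℚ)) + (i:ℚ)) = (-y + i) := by
      intro i _
      rw [hy, hx1]
      ring
    rw [Finset.prod_congr rfl hterm, prod_neg]
    simp only [ffq]
    ring
  -- expand the left-hand terms via the finite difference formula
  have lhsk : ∀ k ∈ Finset.Icc 1 N,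
      a (p-k) * ((∏ i ∈ Finset.range k, (x1 + i)) / (k.factorial : ℚ))
      = ∑ j ∈ Finset.range (N+1),
          (if j ≤ k then a (p-k) * ((-1:ℚ)^(k-j) * (((p-j).choose (k-j) : ℕ):ℚ) * ffq y j) else 0) := by
    intro k hk
    obtain ⟨hk1, hkN⟩ := Finset.mem_Icc.mp hk
    have hkp : k ≤ p := by omega
    have e0 : (∏ i ∈ Finset.range k, (x1 + i)) / (k.factorial : ℚ) = ffq (x1 + (k:ℚ) - 1) k := by
      simp only [ffq, prod_asc x1 k]
    have hcast : ((p - k + 1 : ℕ):ℚ) = (p:ℚ) - (k:ℚ) + 1 := by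
      push_cast [Nat.cast_sub hkp]
      ring
    have e1 : x1 + (k:ℚ) - 1 = y - ((p - k + 1 : ℕ):ℚ) := by
      rw [hcast, hy]
      ring
    rw [e0, e1, ffq_FD k (p-k+1) y, Finset.mul_sum, ← Finset.sum_range_reflect]
    have hterm : ∀ j ∈ Finset.range (k+1),
        a (p-k) * ((-1:ℚ)^(k+1-1-j) * (((p-k+1 + (k+1-1-j) - 1).choose (k+1-1-j) : ℕ):ℚ)
          * ffq y (k - (k+1-1-j)))
        = (if j ≤ k then a (p-k) * ((-1:ℚ)^(k-j) * (((p-j).choose (k-j) : ℕ):ℚ) * ffq y j) else 0) := by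
      intro j hj
      have hjk : j ≤ k := by
        have := Finset.mem_range.mp hj
        omega
      rw [if_pos hjk]
      have e2 : k+1-1-j = k-j := by omega
      rw [e2]
      have e3 : p-k+1 + (k-j) - 1 = p-j := by omega
      have e4 : k - (k-j) = j := by omega
      rw [e3, e4]
    rw [Finset.sum_congr rfl hterm]
    apply Finset.sum_subset (Finset.range_subset_range.mpr (by omega))
    intro j hj hnj
    rw [if_neg]
    simp only [Finset.mem_range] at hj hnj
    omega
  rw [Finset.sum_congr rfl lhsk, Finset.sum_comm, Finset.sum_congr rfl rhsk]
  -- reindex the right-hand sum over range (N+1)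
  have hrhs : ∑ k ∈ Finset.Icc 1 N, a (p-k) * ((-1:ℚ)^k * ffq y k)
      = ∑ j ∈ Finset.range (N+1),
          (if 1 ≤ j then a (p-j) * ((-1:ℚ)^j * ffq y j) else 0) := by
    have hsub : Finset.Icc 1 N ⊆ Finset.range (N+1) := by
      intro j hj
      rw [Finset.mem_range]
      have := Finset.mem_Icc.mp hj
      omega
    rw [show (∑ k ∈ Finset.Icc 1 N, a (p-k) * ((-1:ℚ)^k * ffq y k))
        = ∑ k ∈ Finset.Icc 1 N, (if 1 ≤ k then a (p-k) * ((-1:ℚ)^k * ffq y k) else 0) from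
      Finset.sum_congr rfl fun k hk => by rw [if_pos (Finset.mem_Icc.mp hk).1]]
    apply Finset.sum_subset hsub
    intro j hj hnj
    rw [if_neg]
    simp only [Finset.mem_range] at hj
    simp only [Finset.mem_Icc] at hnj
    omega
  rw [hrhs]
  refine Finset.sum_congr rfl fun j hj => ?_
  have hjN : j ≤ N := by
    have := Finset.mem_range.mp hj
    omega
  by_cases hj1 : 1 ≤ j
  · -- case j ≥ 1
    rw [if_pos hj1, ← Finset.sum_filter]
    have hfilter : (Finset.Icc 1 N).filter (fun k => j ≤ k) = Finset.Icc j N := by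
      ext k
      simp only [Finset.mem_filter, Finset.mem_Icc]
      omega
    rw [hfilter]
    rw [show Finset.Icc j N = Finset.Ico j (N+1) from by rw [Finset.Ico_add_one_right_eq_Icc]]
    rw [Finset.sum_Ico_eq_sum_range]
    set n := p - j with hn
    have hnN : N + 1 - j = n := by omega
    have hn1 : 1 ≤ n := by omega
    rw [hnN]
    have hterm : ∀ t ∈ Finset.range n,
        a (p-(j+t)) * ((-1:ℚ)^((j+t)-j) * (((p-j).choose ((j+t)-j) : ℕ):ℚ) * ffq y j)
        = ffq y j * ((-1:ℚ)^t * (n.choose t : ℚ) * a (n - t)) := by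
      intro t ht
      have htn : t < n := Finset.mem_range.mp ht
      have e5 : (j+t)-j = t := by omega
      have e6 : p-(j+t) = n-t := by omega
      rw [e5, e6, hn]
      ring
    rw [Finset.sum_congr rfl hterm, ← Finset.mul_sum, KEY n]
    have hpar : ((-1:ℚ))^(n+1) = (-1:ℚ)^j := by
      have h1 : ((-1:ℚ))^(n+1) * (-1)^j = 1 := by
        rw [← pow_add]
        refine Even.neg_one_pow ?_
        have : n + 1 + j = p + 1 := by omega
        rw [this]
        exact hpodd.add_one
      have hj2 : ((-1:ℚ))^j * (-1)^j = 1 := by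
        rw [← pow_add]
        exact Even.neg_one_pow ⟨j, by ring⟩
      calc ((-1:ℚ))^(n+1) = (-1)^(n+1) * ((-1)^j * (-1)^j) := by rw [hj2, mul_one]
        _ = ((-1)^(n+1) * (-1)^j) * (-1)^j := by ring
        _ = (-1)^j := by rw [h1, one_mul]
    rw [hpar, hn]
    ring
  · -- case j = 0
    have hj0 : j = 0 := by omega
    subst hj0
    rw [if_neg (by omega)]
    have hKp := KEY p
    have hpar : ((-1:ℚ))^(p+1) = 1 := Even.neg_one_pow hpodd.add_one
    rw [hpar, one_mul, hpN] at hKp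
    rw [Finset.sum_range_succ'] at hKp
    simp only [pow_zero, Nat.choose_zero_right, Nat.cast_one, one_mul, Nat.sub_zero] at hKp
    -- hKp : ∑ t ∈ range N, (-1)^(t+1) * C(p, t+1) * a (p - (t+1)) + a p = a p
    have hzero : ∑ t ∈ Finset.range N, (-1:ℚ)^(t+1) * (p.choose (t+1) : ℚ) * a (p - (t+1)) = 0 := by
      rw [← hpN] at hKp
      linarith [hKp]
    have hmatch : ∀ k ∈ Finset.Icc 1 N,
        (if 0 ≤ k then a (p-k) * ((-1:ℚ)^(k-0) * (((p-0).choose (k-0) : ℕ):ℚ) * ffq y 0) else 0)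
        = a (p-k) * ((-1:ℚ)^k * ((p.choose k : ℕ):ℚ)) := by
      intro k _
      rw [if_pos (Nat.zero_le k)]
      simp only [Nat.sub_zero, ffq, Finset.range_zero, Finset.prod_empty, Nat.factorial_zero]
      norm_num
    rw [Finset.sum_congr rfl hmatch]
    rw [show Finset.Icc 1 N = Finset.Ico 1 (N+1) from by rw [Finset.Ico_add_one_right_eq_Icc]]
    rw [Finset.sum_Ico_eq_sum_range]
    simp only [Nat.add_sub_cancel]
    rw [← hzero]
    refine Finset.sum_congr rfl fun t ht => ?_
    have e7 : 1 + t = t + 1 := by omega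
    rw [e7]
    ring
end

section
/- Let n be a positive integer and let p be a prime with p > n+1. Then the multiple harmonic sum H_{p−1}^{(n)} = ∑_{1≤k₁<k₂<⋯<k_n≤p−1} 1/(k₁k₂⋯k_n) satisfies H_{p−1}^{(n)} ≡ 0 (mod p), i.e. the p-adic valuation of the rational number H_{p−1}^{(n)} is at least 1. -/
open Finset in
lemma tuple_sum_eq {R : Type*} [CommSemiring R] (f : ℕ → R) (r n : ℕ) :
    ∑ k ∈ (Finset.univ.filter fun k : Fin n → Fin (r + 1) =>
      (∀ i j : Fin n, i < j → k i < k j) ∧ ∀ i, 0 < (k i : ℕ)),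
      ∏ i, f (k i : ℕ)
    = ∑ s ∈ (Finset.Icc 1 r).powersetCard n, ∏ m ∈ s, f m := by
  have hmono : ∀ k : Fin n → Fin (r+1), (∀ i j : Fin n, i < j → k i < k j) →
      StrictMono (fun i => ((k i : ℕ))) := by
    intro k h i j hij
    exact h i j hij
  refine Finset.sum_bij (fun k _ => Finset.image (fun i => ((k i : ℕ))) Finset.univ)
    ?_ ?_ ?_ ?_
  · intro k hk
    simp only [Finset.mem_filter, Finset.mem_univ, true_and] at hk
    rw [Finset.mem_powersetCard]
    constructor
    · intro m hm
      simp only [Finset.mem_image, Finset.mem_univ, true_and] at hm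
      obtain ⟨i, rfl⟩ := hm
      exact Finset.mem_Icc.2 ⟨hk.2 i, Fin.is_le _⟩
    · rw [Finset.card_image_of_injective _ (hmono k hk.1).injective, Finset.card_univ,
        Fintype.card_fin]
  · intro k1 hk1 k2 hk2 heq
    simp only [Finset.mem_filter, Finset.mem_univ, true_and] at hk1 hk2
    have hc : (Finset.image (fun i => ((k1 i : ℕ))) Finset.univ).card = n := by
      rw [Finset.card_image_of_injective _ (hmono k1 hk1.1).injective, Finset.card_univ,
        Fintype.card_fin]
    have h1 := Finset.orderEmbOfFin_unique hc (f := fun i => ((k1 i : ℕ)))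
      (fun x => Finset.mem_image_of_mem _ (Finset.mem_univ x)) (hmono k1 hk1.1)
    have h2 := Finset.orderEmbOfFin_unique hc (f := fun i => ((k2 i : ℕ)))
      (fun x => by exact heq ▸ Finset.mem_image_of_mem _ (Finset.mem_univ x)) (hmono k2 hk2.1)
    funext i
    exact Fin.ext (by rw [← h2] at h1; exact congrFun h1 i)
  · intro s hs
    rw [Finset.mem_powersetCard] at hs
    obtain ⟨hsub, hcard⟩ := hs
    have hle : ∀ i : Fin n, s.orderEmbOfFin hcard i < r + 1 := fun i =>
      Nat.lt_succ_of_le (Finset.mem_Icc.1 (hsub (Finset.orderEmbOfFin_mem s hcard i))).2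
    refine ⟨fun i => ⟨s.orderEmbOfFin hcard i, hle i⟩, ?_, ?_⟩
    · simp only [Finset.mem_filter, Finset.mem_univ, true_and]
      constructor
      · intro i j hij
        exact (s.orderEmbOfFin hcard).strictMono hij
      · intro i
        exact (Finset.mem_Icc.1 (hsub (Finset.orderEmbOfFin_mem s hcard i))).1
    · apply Finset.eq_of_subset_of_card_le
      · intro m hm
        simp only [Finset.mem_image, Finset.mem_univ, true_and] at hm
        obtain ⟨i, rfl⟩ := hm
        exact Finset.orderEmbOfFin_mem s hcard i
      · rw [hcard, Finset.card_image_of_injective _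
          (fun a b hab => (s.orderEmbOfFin hcard).injective hab),
          Finset.card_univ, Fintype.card_fin]
  · intro k hk
    simp only [Finset.mem_filter, Finset.mem_univ, true_and] at hk
    rw [Finset.prod_image (fun a _ b _ hab => (hmono k hk.1).injective hab)]


lemma esymm_zero_aux (p n : ℕ) [Fact p.Prime] (hn : 0 < n) (hnp : n < p - 1) :
    ((Finset.univ \ {0} : Finset (ZMod p)).val.esymm n) = 0 := by
  obtain ⟨ζ, hζ⟩ := IsCyclic.exists_generator (α := (ZMod p)ˣ)
  have hord : orderOf ζ = p - 1 := by
    rw [orderOf_eq_card_of_forall_mem_zpowers hζ, Nat.card_eq_fintype_card, ZMod.card_units]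
  set g : ZMod p := (ζ : ZMod p) with hg
  have hg0 : g ≠ 0 := ζ.ne_zero
  set M : Multiset (ZMod p) := (Finset.univ \ {0} : Finset (ZMod p)).val with hM
  have hmem : ∀ a : ZMod p, a ∈ M ↔ a ≠ 0 := by
    intro a
    rw [hM, ← Finset.mem_def]
    simp
  have hmap : M.map (g • ·) = M := by
    have hnd : (M.map (g • ·)).Nodup :=
      (Finset.univ \ {0} : Finset (ZMod p)).nodup.map
        (fun a b hab => by simpa [smul_eq_mul] using mul_left_cancel₀ hg0 (by simpa using hab))
    refine (Multiset.Nodup.ext hnd (Finset.univ \ {0} : Finset (ZMod p)).nodup).2 ?_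
    intro a
    rw [← hM]
    simp only [Multiset.mem_map, smul_eq_mul]
    rw [show (a ∈ (Finset.univ \ {0} : Finset (ZMod p)).val) ↔ a ∈ M from Iff.rfl, hmem]
    constructor
    · rintro ⟨b, hb, rfl⟩
      exact mul_ne_zero hg0 ((hmem b).1 hb)
    · intro ha
      exact ⟨g⁻¹ * a, (hmem _).2 (mul_ne_zero (inv_ne_zero hg0) ha), by field_simp⟩
  have h2 := Multiset.pow_smul_esymm g n M
  rw [hmap] at h2
  have hkey : (g ^ n - 1) * M.esymm n = 0 := by
    rw [sub_mul, one_mul, sub_eq_zero, ← smul_eq_mul]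
    exact h2
  have hgn : g ^ n ≠ 1 := by
    intro h
    have h1 : (ζ ^ n : (ZMod p)ˣ) = 1 := Units.ext (by push_cast; exact h)
    have hdvd := orderOf_dvd_of_pow_eq_one h1
    rw [hord] at hdvd
    exact absurd (Nat.le_of_dvd hn hdvd) (not_le.2 hnp)
  rcases mul_eq_zero.1 hkey with h | h
  · exact absurd (sub_eq_zero.1 h) hgn
  · exact h

lemma inv_esymm_zero (p n : ℕ) [Fact p.Prime] (hn : 0 < n) (hnp : n < p - 1) :
    ∑ t ∈ (Finset.Icc 1 (p - 1)).powersetCard n, ∏ m ∈ t, ((m : ZMod p))⁻¹ = 0 := by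
  have hp := (Fact.out : p.Prime)
  have hp0 : 0 < p := hp.pos
  have hcast_ne : ∀ m ∈ Finset.Icc 1 (p - 1), ((m : ZMod p)) ≠ 0 := by
    intro m hm
    rw [Finset.mem_Icc] at hm
    rw [Ne, ZMod.natCast_eq_zero_iff]
    intro hdvd
    have := Nat.le_of_dvd (by omega) hdvd
    omega
  have key : (Multiset.map (fun m : ℕ => ((m : ZMod p))⁻¹) (Finset.Icc 1 (p - 1)).val)
      = (Finset.univ \ {0} : Finset (ZMod p)).val := by
    have hnd : (Multiset.map (fun m : ℕ => ((m : ZMod p))⁻¹) (Finset.Icc 1 (p - 1)).val).Nodup := by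
      refine (Finset.Icc 1 (p - 1)).nodup.map_on ?_
      intro a ha b hb hab
      rw [← Finset.mem_def, Finset.mem_Icc] at ha hb
      have h1 : (a : ZMod p) = (b : ZMod p) := inv_injective hab
      have := congrArg ZMod.val h1
      rwa [ZMod.val_cast_of_lt (by omega), ZMod.val_cast_of_lt (by omega)] at this
    refine (Multiset.Nodup.ext hnd (Finset.univ \ {0} : Finset (ZMod p)).nodup).2 ?_
    intro x
    rw [show (x ∈ (Finset.univ \ {0} : Finset (ZMod p)).val) ↔
        x ∈ (Finset.univ \ {0} : Finset (ZMod p)) from Iff.rfl]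
    simp only [Multiset.mem_map, ← Finset.mem_def, Finset.mem_sdiff, Finset.mem_univ,
      Finset.mem_singleton, true_and]
    constructor
    · rintro ⟨m, hm, rfl⟩
      exact inv_ne_zero (hcast_ne m hm)
    · intro hx
      have hxinv : x⁻¹ ≠ 0 := inv_ne_zero hx
      refine ⟨(x⁻¹).val, ?_, ?_⟩
      · rw [Finset.mem_Icc]
        have h1 : (x⁻¹).val ≠ 0 := by
          rw [Ne, ZMod.val_eq_zero]; exact hxinv
        have h2 : (x⁻¹).val < p := ZMod.val_lt _
        omega
      · rw [ZMod.natCast_val, ZMod.cast_id, inv_inv]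
  rw [← Finset.esymm_map_val, key]
  exact esymm_zero_aux p n hn hnp





/-- `x ≡ y (mod p^m)` for rationals: `x - y = p^m * u / v` with `p ∤ v`. -/
def modCong (p m : ℕ) (x y : ℚ) : Prop :=
  ∃ u v : ℤ, ¬ (p : ℤ) ∣ v ∧ x - y = (p : ℚ) ^ m * u / v

theorem multiple_harmonic_sum_zero_mod_p (n : ℕ) (hn : 0 < n)
    (p : ℕ) (hp : p.Prime) (hpn : n + 1 < p) :
    modCong p 1 (mhs (p - 1) n) 0 := by
  haveI : Fact p.Prime := ⟨hp⟩
  set r := p - 1 with hr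
  have hnr : n < r := by omega
  have hA : mhs r n = ∑ t ∈ (Finset.Icc 1 r).powersetCard n,
      ∏ m ∈ t, (1 / (m : ℚ)) := by
    rw [mhs]
    exact tuple_sum_eq (fun m => 1 / (m : ℚ)) r n
  set A : ℤ := ∑ t ∈ (Finset.Icc 1 r).powersetCard n,
      ∏ m ∈ t, ((r.factorial / m : ℕ) : ℤ) with hAdef
  have hmdvd : ∀ t ∈ (Finset.Icc 1 r).powersetCard n, ∀ m ∈ t,
      m ∣ r.factorial ∧ m ≠ 0 := by
    intro t ht m hm
    rw [Finset.mem_powersetCard] at ht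
    have := Finset.mem_Icc.1 (ht.1 hm)
    exact ⟨Nat.dvd_factorial (by omega) this.2, by omega⟩
  have hAQ : (A : ℚ) = (r.factorial : ℚ) ^ n * mhs r n := by
    rw [hA, Finset.mul_sum, hAdef, Int.cast_sum]
    refine Finset.sum_congr rfl ?_
    intro t ht
    rw [Int.cast_prod]
    have hcard : t.card = n := (Finset.mem_powersetCard.1 ht).2
    rw [← hcard, ← Finset.prod_const, ← Finset.prod_mul_distrib]
    refine Finset.prod_congr rfl ?_
    intro m hm
    obtain ⟨hdvd, hm0⟩ := hmdvd t ht m hm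
    rw [Int.cast_natCast, Nat.cast_div hdvd (Nat.cast_ne_zero.2 hm0)]
    ring
  have hAzero : (A : ZMod p) = 0 := by
    rw [hAdef, Int.cast_sum]
    have : ∀ t ∈ (Finset.Icc 1 r).powersetCard n,
        (((∏ m ∈ t, ((r.factorial / m : ℕ) : ℤ)) : ℤ) : ZMod p)
          = (r.factorial : ZMod p) ^ n * ∏ m ∈ t, ((m : ZMod p))⁻¹ := by
      intro t ht
      rw [Int.cast_prod]
      have hcard : t.card = n := (Finset.mem_powersetCard.1 ht).2
      rw [← hcard, ← Finset.prod_const, ← Finset.prod_mul_distrib]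
      refine Finset.prod_congr rfl ?_
      intro m hm
      obtain ⟨hdvd, hm0⟩ := hmdvd t ht m hm
      have hmem := (Finset.mem_powersetCard.1 ht).1 hm
      have hmIcc := Finset.mem_Icc.1 hmem
      have hmlt : m < p := by omega
      have hmne : (m : ZMod p) ≠ 0 := by
        rw [Ne, ZMod.natCast_eq_zero_iff]
        intro hpd
        have := Nat.le_of_dvd (by omega) hpd
        omega
      have hmul : (m : ZMod p) * ((r.factorial / m : ℕ) : ZMod p)
          = (r.factorial : ZMod p) := by
        rw [← Nat.cast_mul, Nat.mul_div_cancel' hdvd]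
      rw [Int.cast_natCast]
      field_simp
      linear_combination hmul
    rw [Finset.sum_congr rfl this, ← Finset.mul_sum,
      inv_esymm_zero p n hn (by omega), mul_zero]
  have hpdvd : (p : ℤ) ∣ A := (ZMod.intCast_zmod_eq_zero_iff_dvd A p).1 hAzero
  obtain ⟨u, hu⟩ := hpdvd
  refine ⟨u, (r.factorial : ℤ) ^ n, ?_, ?_⟩
  · intro hdvd
    have hpint : Prime (p : ℤ) := Nat.prime_iff_prime_int.1 hp
    have h1 : (p : ℤ) ∣ (r.factorial : ℤ) := hpint.dvd_of_dvd_pow hdvd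
    rw [Int.natCast_dvd_natCast] at h1
    have := (Nat.Prime.dvd_factorial hp).1 h1
    omega
  · rw [sub_zero, pow_one]
    have hfac0 : (((r.factorial : ℤ) ^ n : ℤ) : ℚ) ≠ 0 := by
      push_cast
      exact pow_ne_zero _ (Nat.cast_ne_zero.2 r.factorial_ne_zero)
    rw [eq_div_iff hfac0]
    have h2 := hAQ
    rw [hu] at h2
    push_cast at h2 ⊢
    linarith [h2]
end

section
/- The sequence a_n = (−1)^n χ₃(n) belongs to S₋: for every n ≥ 0, ∑_{k=0}^{n} (n choose k) χ₃(k) = −(−1)^n χ₃(n), where χ₃ is the Legendre symbol modulo 3. Moreover, the sequence b_n = (n+1)·C_n/4^n, where C_n = (1/(n+1))·C(2n,n) is the n-th Catalan number, belongs to S₊: for every n ≥ 0, ∑_{k=0}^{n} (n choose k)(−1)^k · C(2k,k)/4^k = C(2n,n)/4^n. -/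
/-- The Legendre symbol modulo 3. -/
def chi3 (k : ℕ) : ℤ :=
  if k % 3 = 1 then 1 else if k % 3 = 2 then -1 else 0

lemma pascal_sum {R : Type*} [CommRing R] (f : ℕ → R) (n : ℕ) :
    ∑ k ∈ Finset.range (n + 2), ((n + 1).choose k : R) * f k =
      ∑ k ∈ Finset.range (n + 1), (n.choose k : R) * f k +
        ∑ k ∈ Finset.range (n + 1), (n.choose k : R) * f (k + 1) := by
  rw [Finset.sum_range_succ' _ (n + 1),
    Finset.sum_range_succ' (fun k => (n.choose k : R) * f k) n]
  simp only [Nat.choose_succ_succ, Nat.cast_add, add_mul, Finset.sum_add_distrib,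
    Nat.choose_zero_right, Nat.cast_one, one_mul, Nat.succ_eq_add_one]
  rw [Finset.sum_range_succ (fun x => ((n.choose (x + 1) : R)) * f (x + 1)) n]
  simp [Nat.choose_succ_self]
  ring

lemma chi3_three (m : ℕ) : chi3 (m + 2) = -(chi3 m + chi3 (m + 1)) := by
  have h : m % 3 = 0 ∨ m % 3 = 1 ∨ m % 3 = 2 := by omega
  rcases h with h | h | h <;> simp [chi3, Nat.add_mod, h]

lemma chi3_key (n : ℕ) : ∀ j : ℕ,
    ∑ k ∈ Finset.range (n + 1), (n.choose k : ℤ) * chi3 (k + j) =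
      (-1) ^ n * chi3 (2 * n + j) := by
  induction n with
  | zero => intro j; simp
  | succ n ih =>
    intro j
    rw [show n + 1 + 1 = n + 2 from rfl, pascal_sum (fun k => chi3 (k + j)) n]
    have h2 : ∑ k ∈ Finset.range (n + 1), (n.choose k : ℤ) * chi3 (k + 1 + j) =
        ∑ k ∈ Finset.range (n + 1), (n.choose k : ℤ) * chi3 (k + (j + 1)) := by
      apply Finset.sum_congr rfl
      intro k _
      rw [show k + 1 + j = k + (j + 1) from by omega]
    rw [h2, ih j, ih (j + 1)]
    rw [show 2 * (n + 1) + j = (2 * n + j) + 2 from by ring,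
      show 2 * n + (j + 1) = (2 * n + j) + 1 from by ring, chi3_three]
    ring

lemma cat_aux (n : ℕ) : ∀ m : ℕ,
    (∑ k ∈ Finset.range (n + 1),
        (n.choose k : ℚ) * (-1) ^ k * ((2 * (k + m)).choose (k + m) : ℚ) / 4 ^ (k + m)) *
      ((n + m).choose n : ℚ) =
      ((2 * n).choose n : ℚ) * ((2 * m).choose m : ℚ) / 4 ^ (n + m) := by
  induction n with
  | zero => intro m; simp
  | succ n ih =>
    intro m
    simp only [mul_assoc, mul_div_assoc] at ih ⊢
    rw [show n + 1 + 1 = n + 2 from rfl,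
      pascal_sum (fun k => (-1 : ℚ) ^ k * (((2 * (k + m)).choose (k + m) : ℚ) / 4 ^ (k + m))) n]
    have h2 : ∑ k ∈ Finset.range (n + 1),
        (n.choose k : ℚ) * ((-1) ^ (k + 1) * (((2 * (k + 1 + m)).choose (k + 1 + m) : ℚ) / 4 ^ (k + 1 + m))) =
        -∑ k ∈ Finset.range (n + 1),
          (n.choose k : ℚ) * ((-1) ^ k * (((2 * (k + (m + 1))).choose (k + (m + 1)) : ℚ) / 4 ^ (k + (m + 1)))) := by
      rw [← Finset.sum_neg_distrib]
      apply Finset.sum_congr rfl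
      intro k _
      rw [show k + 1 + m = k + (m + 1) from by omega]
      ring
    rw [h2]
    -- nonzeroness
    have hn1 : ((n : ℚ) + 1) ≠ 0 := by positivity
    have hm1 : ((m : ℚ) + 1) ≠ 0 := by positivity
    have hB : (((n + m).choose n : ℚ)) ≠ 0 := by
      exact_mod_cast Nat.cast_ne_zero.2 (Nat.choose_pos (Nat.le_add_right n m)).ne'
    have hB2 : (((n + (m + 1)).choose n : ℚ)) ≠ 0 := by
      exact_mod_cast Nat.cast_ne_zero.2 (Nat.choose_pos (Nat.le_add_right n (m + 1))).ne'
    -- recurrences, cast to ℚ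
    have r1 : (((n + 1 + m).choose (n + 1) : ℚ)) * ((n : ℚ) + 1) =
        ((n : ℚ) + (m : ℚ) + 1) * (((n + m).choose n : ℚ)) := by
      have h := Nat.add_one_mul_choose_eq (n + m) n
      have hq : ((n : ℚ) + m + 1) * ((n + m).choose n : ℚ) =
          ((n + m + 1).choose (n + 1) : ℚ) * ((n : ℚ) + 1) := by exact_mod_cast h
      rw [show n + 1 + m = n + m + 1 from by omega]
      linear_combination -hq
    have r2 : (((n + (m + 1)).choose n : ℚ)) * ((m : ℚ) + 1) =
        ((n : ℚ) + (m : ℚ) + 1) * (((n + m).choose n : ℚ)) := by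
      have h := Nat.add_one_mul_choose_eq (n + m) m
      have hs1 : (n + m).choose m = (n + m).choose n := by
        rw [add_comm n m, Nat.choose_symm_add, add_comm m n]
      have hs2 : (n + m + 1).choose (m + 1) = (n + m + 1).choose n := by
        rw [show n + m + 1 = (m + 1) + n from by omega, Nat.choose_symm_add]
      rw [hs1, hs2] at h
      have hq : ((n : ℚ) + m + 1) * ((n + m).choose n : ℚ) =
          ((n + m + 1).choose n : ℚ) * ((m : ℚ) + 1) := by exact_mod_cast h
      rw [show n + (m + 1) = n + m + 1 from by omega]
      linear_combination -hq
    have r3 : (((2 * (n + 1)).choose (n + 1) : ℚ)) * ((n : ℚ) + 1) =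
        2 * (2 * (n : ℚ) + 1) * (((2 * n).choose n : ℚ)) := by
      have h := Nat.succ_mul_centralBinom_succ n
      simp only [Nat.centralBinom] at h
      have hq : ((n : ℚ) + 1) * ((2 * (n + 1)).choose (n + 1) : ℚ) =
          2 * (2 * (n : ℚ) + 1) * ((2 * n).choose n : ℚ) := by exact_mod_cast h
      linear_combination hq
    have r4 : (((2 * (m + 1)).choose (m + 1) : ℚ)) * ((m : ℚ) + 1) =
        2 * (2 * (m : ℚ) + 1) * (((2 * m).choose m : ℚ)) := by
      have h := Nat.succ_mul_centralBinom_succ m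
      simp only [Nat.centralBinom] at h
      have hq : ((m : ℚ) + 1) * ((2 * (m + 1)).choose (m + 1) : ℚ) =
          2 * (2 * (m : ℚ) + 1) * ((2 * m).choose m : ℚ) := by exact_mod_cast h
      linear_combination hq
    -- express sums via ih
    have hS0 : ∑ k ∈ Finset.range (n + 1),
        (n.choose k : ℚ) * ((-1) ^ k * (((2 * (k + m)).choose (k + m) : ℚ) / 4 ^ (k + m))) =
        ((2 * n).choose n : ℚ) * (((2 * m).choose m : ℚ) / 4 ^ (n + m)) / ((n + m).choose n : ℚ) := by
      rw [eq_div_iff hB]; exact ih m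
    have hS1 : ∑ k ∈ Finset.range (n + 1),
        (n.choose k : ℚ) * ((-1) ^ k * (((2 * (k + (m + 1))).choose (k + (m + 1)) : ℚ) / 4 ^ (k + (m + 1)))) =
        ((2 * n).choose n : ℚ) * (((2 * (m + 1)).choose (m + 1) : ℚ) / 4 ^ (n + (m + 1))) / ((n + (m + 1)).choose n : ℚ) := by
      rw [eq_div_iff hB2]; exact ih (m + 1)
    rw [hS0, hS1]
    -- turn recurrences into explicit values
    have hB1' : (((n + 1 + m).choose (n + 1) : ℚ)) =
        ((n : ℚ) + (m : ℚ) + 1) * (((n + m).choose n : ℚ)) / ((n : ℚ) + 1) := by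
      rw [eq_div_iff hn1]; exact r1
    have hB2' : (((n + (m + 1)).choose n : ℚ)) =
        ((n : ℚ) + (m : ℚ) + 1) * (((n + m).choose n : ℚ)) / ((m : ℚ) + 1) := by
      rw [eq_div_iff hm1]; exact r2
    have hcn1 : (((2 * (n + 1)).choose (n + 1) : ℚ)) =
        2 * (2 * (n : ℚ) + 1) * (((2 * n).choose n : ℚ)) / ((n : ℚ) + 1) := by
      rw [eq_div_iff hn1]; exact r3
    have hcm1 : (((2 * (m + 1)).choose (m + 1) : ℚ)) =
        2 * (2 * (m : ℚ) + 1) * (((2 * m).choose m : ℚ)) / ((m : ℚ) + 1) := by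
      rw [eq_div_iff hm1]; exact r4
    rw [hB1', hB2', hcn1, hcm1]
    rw [show n + (m + 1) = n + m + 1 from by omega, show n + 1 + m = n + m + 1 from by omega,
      pow_succ]
    have h4 : ((4 : ℚ) ^ (n + m)) ≠ 0 := by positivity
    field_simp
    ring

theorem legendre3_in_Sminus_catalan_in_Splus :
    (∀ n : ℕ, ∑ k ∈ Finset.range (n + 1), (n.choose k : ℤ) * chi3 k =
      -((-1) ^ n * chi3 n)) ∧
    (∀ n : ℕ, ∑ k ∈ Finset.range (n + 1),
        (n.choose k : ℚ) * (-1) ^ k * (((2 * k).choose k : ℚ) / 4 ^ k) =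
      ((2 * n).choose n : ℚ) / 4 ^ n) := by
  constructor
  · intro n
    have h := chi3_key n 0
    simp only [add_zero] at h
    rw [h]
    have h2 : chi3 (2 * n) = -chi3 n := by
      have h : n % 3 = 0 ∨ n % 3 = 1 ∨ n % 3 = 2 := by omega
      rcases h with h | h | h <;> simp [chi3, Nat.mul_mod, h]
    rw [h2]; ring
  · intro n
    have h := cat_aux n 0
    simp only [add_zero, Nat.choose_self, Nat.cast_one, mul_one, Nat.mul_zero,
      Nat.choose_zero_right] at h
    rw [← h]
    apply Finset.sum_congr rfl
    intro k _
    ring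
end
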